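/- Let n be a positive integer and let r, a ∈ ℝ^n be vectors with strictly positive entries such that ‖a‖₁ ≤ ‖r‖₁, and let μ > 0 be a real number such that μ·r has all integer entries. Then −Σ_{i∈[n]} r_i log(a_i / r_i) ≥ (1/10) · min{ 1/μ , ‖a − r‖₁² / ‖r‖₁ }. -/

import Mathlib

open Real

lemma mul_log_aux {x : ℝ} (hx : 0 < x) : 0 ≤ x * Real.log x - x + 1 := by
  have h := Real.one_sub_inv_le_log_of_pos hx
  have hxi : x * x⁻¹ = 1 := mul_inv_cancel₀ hx.ne'
  nlinarith

lemma key1 {t : ℝ} (ht : 0 < t) (ht1 : t ≤ 1) :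
    (t - 1) ^ 2 ≤ 2 * (t * Real.log t - t + 1) := by
  set h : ℝ → ℝ := fun x => 2 * (x * Real.log x - x + 1) - (x - 1) ^ 2 with hh
  have hderiv : ∀ x ∈ Set.Ioo t 1, HasDerivAt h (2 * Real.log x - 2 * (x - 1)) x := by
    intro x hx
    have hx0 : x ≠ 0 := ne_of_gt (ht.trans hx.1)
    have h1 : HasDerivAt (fun x : ℝ => x * Real.log x) (Real.log x + 1) x :=
      Real.hasDerivAt_mul_log hx0
    have h2 : HasDerivAt h (2 * (Real.log x + 1 - 1) - 2 * (x-1)) x := by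
      unfold h
      have := (((h1.sub ((hasDerivAt_id' x))).add_const 1).const_mul 2).sub
        ((((hasDerivAt_id' x)).sub_const 1).pow 2)
      refine this.congr_deriv ?_
      push_cast
      ring
    convert h2 using 1; ring
  have hanti : AntitoneOn h (Set.Icc t 1) := by
    apply antitoneOn_of_deriv_nonpos (convex_Icc t 1)
    · apply Continuous.continuousOn
      unfold h
      exact (continuous_const.mul ((Real.continuous_mul_log.sub continuous_id).add
        continuous_const)).sub ((continuous_id.sub continuous_const).pow 2)
    · intro x hx
      rw [interior_Icc] at hx
      exact (hderiv x hx).differentiableAt.differentiableWithinAt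
    · intro x hx
      rw [interior_Icc] at hx
      rw [(hderiv x hx).deriv]
      have := Real.log_le_sub_one_of_pos (ht.trans hx.1)
      linarith
  have h1 : h 1 ≤ h t := hanti (Set.mem_Icc.2 ⟨le_refl t, ht1⟩) (Set.mem_Icc.2 ⟨ht1, le_refl 1⟩) ht1
  simp [hh, Real.log_one] at h1
  linarith [h1]

lemma key2 {t : ℝ} (ht : 1 ≤ t) :
    (t - 1) ^ 2 ≤ 2 * t * (t * Real.log t - t + 1) := by
  set g : ℝ → ℝ := fun x => 2 * (x ^ 2 * Real.log x) - 2 * x ^ 2 + 2 * x - (x - 1) ^ 2 with hg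
  have hderiv : ∀ x ∈ Set.Ioo 1 t, HasDerivAt g (4 * (x * Real.log x - x + 1)) x := by
    intro x hx
    have hx0 : (0:ℝ) < x := lt_trans one_pos hx.1
    have h1 : HasDerivAt (fun x : ℝ => x ^ 2 * Real.log x) (2 * x * Real.log x + x) x := by
      have := (hasDerivAt_pow 2 x).mul (Real.hasDerivAt_log hx0.ne')
      refine this.congr_deriv ?_
      field_simp
      ring
    have h2 : HasDerivAt g (2 * (2 * x * Real.log x + x) - 2 * (2 * x) + 2 - 2 * (x - 1)) x := by
      unfold g
      have := (((h1.const_mul 2).sub ((hasDerivAt_pow 2 x).const_mul 2)).add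
        (((hasDerivAt_id' x)).const_mul 2)).sub ((((hasDerivAt_id' x)).sub_const 1).pow 2)
      refine this.congr_deriv ?_
      push_cast
      ring
    convert h2 using 1; ring
  have hmono : MonotoneOn g (Set.Icc 1 t) := by
    apply monotoneOn_of_deriv_nonneg (convex_Icc 1 t)
    · apply ContinuousOn.sub
      apply ContinuousOn.add
      apply ContinuousOn.sub
      · exact (ContinuousOn.mul (continuous_pow 2).continuousOn
          (Real.continuousOn_log.mono (by intro x hx; simp; linarith [hx.1]))).const_smul 2
          |>.congr (by intro x hx; simp [smul_eq_mul])
      · exact ((continuous_pow 2).continuousOn.const_smul 2).congr (by intro x hx; simp [smul_eq_mul])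
      · exact (continuous_id.continuousOn.const_smul 2).congr (by intro x hx; simp [smul_eq_mul])
      · exact ((continuous_id.sub continuous_const).pow 2).continuousOn
    · intro x hx
      rw [interior_Icc] at hx
      exact (hderiv x hx).differentiableAt.differentiableWithinAt
    · intro x hx
      rw [interior_Icc] at hx
      rw [(hderiv x hx).deriv]
      have := mul_log_aux (lt_trans one_pos hx.1)
      linarith
  have h1 : g 1 ≤ g t := hmono (Set.mem_Icc.2 ⟨le_refl 1, ht⟩) (Set.mem_Icc.2 ⟨ht, le_refl t⟩) ht
  simp [hg, Real.log_one] at h1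
  nlinarith [h1]

lemma ptwise {r a : ℝ} (hr : 0 < r) (ha : 0 < a) :
    (r - a) ^ 2 ≤ 2 * (r + a) * (r * Real.log (r / a) - r + a) := by
  set t := r / a with htdef
  have ht : 0 < t := div_pos hr ha
  have hra : r = t * a := by rw [htdef]; field_simp
  have hnn : 0 ≤ t * Real.log t - t + 1 := mul_log_aux ht
  have hat : a * t = r := by rw [htdef]; field_simp
  have hexp : r * Real.log (r/a) - r + a = a * (t * Real.log t - t + 1) := by
    have h3 : a * (t * Real.log t - t + 1) = (a * t) * Real.log t - (a * t) + a := by ring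
    rw [h3, hat, htdef]
  rcases le_or_gt t 1 with h|h
  · have hk := key1 ht h
    have h2 : (r - a)^2 = a^2 * (t-1)^2 := by rw [hra]; ring
    rw [h2, hexp]
    nlinarith [sq_nonneg (t-1), mul_le_mul_of_nonneg_left hk (le_of_lt (sq_nonneg a |>.lt_of_ne' (by positivity)))]
  · have hk := key2 h.le
    have h2 : (r - a)^2 = a^2 * (t-1)^2 := by rw [hra]; ring
    rw [h2, hexp]
    have : a ^ 2 * (t-1)^2 ≤ a^2 * (2 * t * (t * Real.log t - t + 1)) :=
      mul_le_mul_of_nonneg_left hk (by positivity)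
    calc a^2 * (t-1)^2 ≤ a^2 * (2 * t * (t * Real.log t - t + 1)) := this
      _ = 2 * r * (a * (t * Real.log t - t + 1)) := by rw [hra]; ring
      _ ≤ 2 * (r + a) * (a * (t * Real.log t - t + 1)) := by
          apply mul_le_mul_of_nonneg_right (by linarith) (by positivity)


/-- Lower bound on the dual increase of a Sinkhorn row-scaling step. -/
theorem stmt_5 (n : ℕ) (hn : 0 < n) (r a : Fin n → ℝ)
    (hr : ∀ i, 0 < r i) (ha : ∀ i, 0 < a i)
    (h1 : ∑ i, |a i| ≤ ∑ i, |r i|)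
    (μ : ℝ) (hμ : 0 < μ) (hrint : ∀ i, ∃ k : ℤ, μ * r i = k) :
    -(∑ i, r i * Real.log (a i / r i)) ≥
      (1/10 : ℝ) * min (1 / μ) ((∑ i, |a i - r i|) ^ 2 / ∑ i, |r i|) := by
  have habsr : ∀ i, |r i| = r i := fun i => abs_of_pos (hr i)
  have habsa : ∀ i, |a i| = a i := fun i => abs_of_pos (ha i)
  simp only [habsr, habsa] at h1 ⊢
  have hne : (Finset.univ : Finset (Fin n)).Nonempty := by
    haveI : Nonempty (Fin n) := Fin.pos_iff_nonempty.1 hn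
    exact Finset.univ_nonempty
  set R := ∑ i, r i with hR
  set A := ∑ i, a i with hA
  set δ := ∑ i, |a i - r i| with hδ
  have hRpos : 0 < R := Finset.sum_pos (fun i _ => hr i) hne
  have hApos : 0 < A := Finset.sum_pos (fun i _ => ha i) hne
  -- rewrite goal
  have hflip : -(∑ i, r i * Real.log (a i / r i)) = ∑ i, r i * Real.log (r i / a i) := by
    rw [← Finset.sum_neg_distrib]
    apply Finset.sum_congr rfl
    intro i _
    rw [Real.log_div (ha i).ne' (hr i).ne', Real.log_div (hr i).ne' (ha i).ne']
    ring
  rw [hflip]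
  set D := ∑ i, r i * Real.log (r i / a i) with hD
  -- sum of nonneg excess
  have hXnn : ∀ i, 0 ≤ r i * Real.log (r i / a i) - r i + a i := by
    intro i
    have := ptwise (hr i) (ha i)
    nlinarith [sq_nonneg (r i - a i), hr i, ha i]
  have hsumX : ∑ i, (r i * Real.log (r i / a i) - r i + a i) = D - R + A := by
    rw [hD, hR, hA, Finset.sum_add_distrib, Finset.sum_sub_distrib]
  have hsumXnn : 0 ≤ D - R + A := by
    rw [← hsumX]; exact Finset.sum_nonneg (fun i _ => hXnn i)
  -- Cauchy-Schwarz
  have hCS : δ ^ 2 ≤ (∑ i, (a i - r i) ^ 2 / (r i + a i)) * (∑ i, (r i + a i)) := by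
    have hkey := Finset.sum_mul_sq_le_sq_mul_sq Finset.univ
      (fun i => |a i - r i| / Real.sqrt (r i + a i)) (fun i => Real.sqrt (r i + a i))
    have h2 : ∀ i : Fin n, |a i - r i| / Real.sqrt (r i + a i) * Real.sqrt (r i + a i)
        = |a i - r i| := by
      intro i
      have : Real.sqrt (r i + a i) ≠ 0 := by
        have : (0:ℝ) < r i + a i := by linarith [hr i, ha i]
        positivity
      field_simp
    have h3 : ∀ i : Fin n, (|a i - r i| / Real.sqrt (r i + a i)) ^ 2
        = (a i - r i) ^ 2 / (r i + a i) := by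
      intro i
      have hpos : (0:ℝ) ≤ r i + a i := by linarith [hr i, ha i]
      rw [div_pow, sq_abs, Real.sq_sqrt hpos]
    have h4 : ∀ i : Fin n, (Real.sqrt (r i + a i)) ^ 2 = r i + a i := by
      intro i
      exact Real.sq_sqrt (by linarith [hr i, ha i])
    simp only [h2, h3, h4] at hkey
    exact hkey
  -- pointwise bound on summands
  have hpt : ∀ i : Fin n, (a i - r i) ^ 2 / (r i + a i)
      ≤ 2 * (r i * Real.log (r i / a i) - r i + a i) := by
    intro i
    have hpos : (0:ℝ) < r i + a i := by linarith [hr i, ha i]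
    rw [div_le_iff₀ hpos]
    have := ptwise (hr i) (ha i)
    nlinarith
  have hsum1 : ∑ i, (a i - r i) ^ 2 / (r i + a i) ≤ 2 * (D - R + A) := by
    calc ∑ i, (a i - r i) ^ 2 / (r i + a i)
        ≤ ∑ i, 2 * (r i * Real.log (r i / a i) - r i + a i) :=
          Finset.sum_le_sum (fun i _ => hpt i)
      _ = 2 * (D - R + A) := by rw [← Finset.mul_sum, hsumX]
  have hsum2 : ∑ i, (r i + a i) = R + A := by
    rw [hR, hA, Finset.sum_add_distrib]
  rw [hsum2] at hCS
  have hsq : 0 ≤ ∑ i, (a i - r i) ^ 2 / (r i + a i) :=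
    Finset.sum_nonneg (fun i _ => by have := hr i; have := ha i; positivity)
  -- combine: δ² ≤ 4 R D
  have hfinal : δ ^ 2 ≤ 4 * R * D := by
    have hRA : R + A ≤ 2 * R := by linarith
    have hDge : D - R + A ≤ D := by linarith
    have hDnn : 0 ≤ D := le_trans hsumXnn (by linarith)
    calc δ ^ 2 ≤ (∑ i, (a i - r i) ^ 2 / (r i + a i)) * (R + A) := hCS
      _ ≤ (2 * (D - R + A)) * (R + A) := by
          apply mul_le_mul_of_nonneg_right hsum1 (by linarith)
      _ ≤ (2 * D) * (2 * R) := by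
          apply mul_le_mul (by linarith) hRA (by linarith) (by linarith)
      _ = 4 * R * D := by ring
  have hmin : min (1 / μ) (δ ^ 2 / R) ≤ δ ^ 2 / R := min_le_right _ _
  have hdiv : δ ^ 2 / R ≤ 4 * D := by
    rw [div_le_iff₀ hRpos]
    nlinarith
  linarith [hmin, hdiv]
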